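/- Let l : H' → H be a bounded linear Fredholm operator between Banach spaces. Then l factors as l = p ∘ e where e : H' → W × H' is the closed embedding v ↦ (0, v) for some finite-dimensional vector space W (a complement to im(l) in H), and p : W × H' → H, p(w, v) = w + l(v), is a surjective bounded linear map whose kernel is finite-dimensional (isomorphic to ker(l)). -/

import Mathlib

open Set Function Topology

/-- A bounded linear Fredholm operator `l : H' → H` factors as `l = p ∘ e` with
`e : H' → W × H'` the closed embedding `v ↦ (0, v)` for a finite-dimensional complement
`W` of `im l`, and `p : W × H' → H`, `p (w, v) = w + l v`, a surjective continuous
linear map with finite-dimensional kernel isomorphic to `ker l`. -/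
theorem stmt_17 {H' H : Type*}
    [NormedAddCommGroup H'] [NormedSpace ℝ H'] [CompleteSpace H']
    [NormedAddCommGroup H] [NormedSpace ℝ H] [CompleteSpace H]
    (l : H' →L[ℝ] H)
    (hker : FiniteDimensional ℝ (LinearMap.ker (l : H' →ₗ[ℝ] H)))
    (hcoker : FiniteDimensional ℝ (H ⧸ LinearMap.range (l : H' →ₗ[ℝ] H)))
    (hclosed : IsClosed (Set.range l)) :
    ∃ W : Submodule ℝ H, FiniteDimensional ℝ W ∧
      IsCompl W (LinearMap.range (l : H' →ₗ[ℝ] H)) ∧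
      let p : (W × H') →ₗ[ℝ] H := (W.subtype).coprod (l : H' →ₗ[ℝ] H)
      Surjective p ∧
      Continuous p ∧
      FiniteDimensional ℝ (LinearMap.ker p) ∧
      Nonempty ((LinearMap.ker p) ≃ₗ[ℝ] (LinearMap.ker (l : H' →ₗ[ℝ] H))) ∧
      IsClosedEmbedding (fun v : H' => ((0 : W), v)) ∧
      ∀ v : H', p ((0 : W), v) = l v := by
  obtain ⟨W, hW⟩ := Submodule.exists_isCompl (LinearMap.range (l : H' →ₗ[ℝ] H))
  have hWfin : FiniteDimensional ℝ W := by
    exact Module.Finite.equiv (Submodule.quotientEquivOfIsCompl _ W hW)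
  refine ⟨W, hWfin, hW.symm, ?_⟩
  intro p
  have hsurj : Surjective p := by
    rw [← LinearMap.range_eq_top, LinearMap.range_coprod, Submodule.range_subtype]
    exact hW.symm.sup_eq_top
  have hcont : Continuous p := by
    have : (p : W × H' → H) = fun x => (x.1 : H) + l x.2 := rfl
    rw [this]
    exact (continuous_subtype_val.comp continuous_fst).add (l.continuous.comp continuous_snd)
  have hkerp : ∀ x : W × H', p x = 0 ↔ x.1 = 0 ∧ l x.2 = 0 := by
    intro ⟨w, v⟩
    constructor
    · intro h
      have hw : (w : H) ∈ W ⊓ LinearMap.range (l : H' →ₗ[ℝ] H) := by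
        refine ⟨w.2, ⟨-v, ?_⟩⟩
        have : (w : H) + l v = 0 := h
        simp only [map_neg]
        exact (eq_neg_of_add_eq_zero_left this).symm
      rw [hW.symm.inf_eq_bot] at hw
      have hw0 : w = 0 := Subtype.ext hw
      constructor
      · exact hw0
      · have : (w : H) + l v = 0 := h
        rw [hw0] at this; simpa using this
    · rintro ⟨h1, h2⟩
      have h1' : w = 0 := h1
      have h2' : l v = 0 := h2
      show (w : H) + l v = 0
      rw [h1', h2']; simp
  -- equiv ker p ≃ ker l
  let f : LinearMap.ker p →ₗ[ℝ] LinearMap.ker (l : H' →ₗ[ℝ] H) := by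
    refine LinearMap.codRestrict _ ((LinearMap.snd ℝ W H').comp (LinearMap.ker p).subtype) ?_
    intro ⟨x, hx⟩
    exact ((hkerp x).1 hx).2
  have hfbij : Bijective f := by
    constructor
    · intro ⟨x, hx⟩ ⟨y, hy⟩ h
      have h2 : x.2 = y.2 := congrArg Subtype.val h
      have hx1 := ((hkerp x).1 hx).1
      have hy1 := ((hkerp y).1 hy).1
      ext
      · rw [hx1, hy1]
      · exact h2
    · intro ⟨v, hv⟩
      refine ⟨⟨(0, v), (hkerp (0, v)).2 ⟨rfl, hv⟩⟩, rfl⟩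
  have hequiv : Nonempty ((LinearMap.ker p) ≃ₗ[ℝ] (LinearMap.ker (l : H' →ₗ[ℝ] H))) :=
    ⟨LinearEquiv.ofBijective f hfbij⟩
  have hfinker : FiniteDimensional ℝ (LinearMap.ker p) :=
    Module.Finite.equiv hequiv.some.symm
  refine ⟨hsurj, hcont, hfinker, hequiv, ?_, fun v => by simp [p]⟩
  have hiso : Isometry (fun v : H' => ((0 : W), v)) := by
    intro a b
    simp [Prod.edist_eq]
  exact hiso.isClosedEmbedding
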